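/- Let q be a prime power and n a positive integer. Then CN_q(n) ≥ q^n · (1 − Σ_{d | n} (1 − φ_d(X^{n/d}−1)/q^n)), where for each divisor d of n, φ_d(X^{n/d}−1) is the polynomial Euler function of X^{n/d}−1 computed in F_{q^d}[X]. -/

import Mathlib

open Polynomial

/-- `x` is a normal element of `E` over the subfield `K` (of cardinality `q ^ l`, `l ∣ n`):
its conjugates `x, x^(q^l), …, x^(q^(l(n/l-1)))` form a `K`-basis of `E`. -/
def IsNormalElementOver (q l n : ℕ) {E : Type} [Field E] (K : Subfield E) (x : E) : Prop :=
  ∃ B : Module.Basis (Fin (n / l)) K E, ∀ i : Fin (n / l), B i = x ^ (q ^ l) ^ (i : ℕ)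

/-- `x ∈ E = F_{q^n}` is completely normal over `F_q`: for every divisor `l` of `n`,
`x` is normal over the intermediate field with `q ^ l` elements. -/
def IsCompletelyNormal (q n : ℕ) {E : Type} [Field E] (x : E) : Prop :=
  ∀ l : ℕ, l ∣ n → ∀ K : Subfield E, Nat.card K = q ^ l → IsNormalElementOver q l n K x

/-- `x` is a primitive element: it generates the multiplicative group `Eˣ`. -/
def IsPrimitiveElement {E : Type} [Field E] (x : E) : Prop :=
  ∀ y : E, y ≠ 0 → ∃ k : ℕ, x ^ k = y

/-- `x` is `r`-free: `x = y ^ d` with `d ∣ r` forces `d = 1`. -/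
def IsFree {E : Type} [Field E] (r : ℕ) (x : E) : Prop :=
  ∀ d : ℕ, d ∣ r → (∃ y : E, x = y ^ d) → d = 1

/-- `CN_q(n)`: the number of completely normal elements of `E = F_{q^n}` over `F_q`. -/
noncomputable def CN (q n : ℕ) (E : Type) [Field E] : ℕ :=
  Nat.card {x : E // IsCompletelyNormal q n x}

/-- `CN_q^r(n)`: the number of `r`-free completely normal elements of `E = F_{q^n}` over `F_q`. -/
noncomputable def CNfree (q n r : ℕ) (E : Type) [Field E] : ℕ :=
  Nat.card {x : E // IsFree r x ∧ IsCompletelyNormal q n x}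

/-- `PCN_q(n)`: the number of primitive completely normal elements. -/
noncomputable def PCN (q n : ℕ) (E : Type) [Field E] : ℕ :=
  Nat.card {x : E // IsPrimitiveElement x ∧ IsCompletelyNormal q n x}

/-- The polynomial Euler function: `polyPhi f` is the number of units of `K[X] ⧸ (f)`. -/
noncomputable def polyPhi {K : Type} [Field K] (f : K[X]) : ℕ :=
  Nat.card (K[X] ⧸ Ideal.span {f})ˣ

/-- The number of monic divisors of `f` in `K[X]`. -/
noncomputable def Wpoly {K : Type} [Field K] (f : K[X]) : ℕ :=
  Nat.card {g : K[X] // g.Monic ∧ g ∣ f}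

/-- The squarefree part of the positive integer `N`: the product of its distinct prime factors. -/
def natSqfreePart (N : ℕ) : ℕ := ∏ p ∈ N.primeFactors, p

/-- `IsSqfreePartOf F f`: `F` is the (monic) squarefree part of `f` in `K[X]`. -/
def IsSqfreePartOf {K : Type} [Field K] (F f : K[X]) : Prop :=
  F.Monic ∧ Squarefree F ∧ F ∣ f ∧ ∀ g : K[X], Irreducible g → g ∣ f → g ∣ F

set_option synthInstance.maxHeartbeats 1000000
set_option maxHeartbeats 1000000

section Aux

open Module Submodule Set

variable {E : Type} [Field E] [Fintype E] (K : Subfield E)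

/-- The Frobenius power `x ↦ x ^ |K|` as a `K`-linear endomorphism of `E`. -/
noncomputable def frobK : E →ₗ[K] E where
  toFun x := x ^ Nat.card K
  map_add' x y := by
    letI : Fintype K := Fintype.ofFinite K
    haveI : CharP K (ringChar E) := (K.subtype.charP Subtype.val_injective (ringChar E))
    obtain ⟨s, hp, hcard⟩ := FiniteField.card K (ringChar E)
    haveI : Fact (ringChar E).Prime := ⟨hp⟩
    rw [Nat.card_eq_fintype_card, hcard]
    exact add_pow_char_pow x y (ringChar E) (s : ℕ)
  map_smul' c x := by
    letI : Fintype K := Fintype.ofFinite K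
    have hc : (c : E) ^ Nat.card K = (c : E) := by
      rw [Nat.card_eq_fintype_card]
      calc (c : E) ^ Fintype.card K = ((c ^ Fintype.card K : K) : E) := by push_cast; ring
        _ = (c : E) := by rw [FiniteField.pow_card]
    show ((c : E) * x) ^ Nat.card K = (RingHom.id K) c • (x ^ Nat.card K)
    rw [mul_pow, hc]; rfl

lemma frobK_apply (x : E) : frobK K x = x ^ Nat.card K := rfl

lemma frobK_pow_apply (i : ℕ) (x : E) : ((frobK K) ^ i) x = x ^ (Nat.card K) ^ i := by
  induction i generalizing x with
  | zero => simp
  | succ i ih =>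
      rw [pow_succ, Module.End.mul_apply, ih, frobK_apply, ← pow_mul, ← pow_succ']

lemma aeval_frobK_apply (g : K[X]) (x : E) :
    (aeval (frobK K) g) x = g.sum fun i a => (a : E) * x ^ (Nat.card K) ^ i := by
  rw [aeval_def, eval₂_eq_sum, Polynomial.sum, Polynomial.sum, LinearMap.sum_apply]
  exact Finset.sum_congr rfl fun i _ => by
    rw [Module.End.mul_apply, Module.algebraMap_end_apply, frobK_pow_apply]; rfl

lemma frobK_pow_finrank {m : ℕ} (hm : Module.finrank K E = m) : (frobK K) ^ m = 1 := by
  letI : Fintype K := Fintype.ofFinite K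
  ext x
  rw [frobK_pow_apply, Module.End.one_apply, Nat.card_eq_fintype_card, ← hm,
    ← card_eq_pow_finrank]
  exact FiniteField.pow_card x

lemma aeval_frobK_cyclo {m : ℕ} (hm : Module.finrank K E = m) :
    aeval (frobK K) ((X : K[X]) ^ m - 1) = 0 := by
  rw [map_sub, map_one, map_pow, aeval_X, frobK_pow_finrank K hm, sub_self]

lemma card_K_two_le : 2 ≤ Nat.card K := by
  letI : Fintype K := Fintype.ofFinite K
  rw [Nat.card_eq_fintype_card]
  exact Fintype.one_lt_card

lemma card_E_eq {m : ℕ} (hm : Module.finrank K E = m) :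
    Fintype.card E = (Nat.card K) ^ m := by
  letI : Fintype K := Fintype.ofFinite K
  rw [Nat.card_eq_fintype_card, ← hm]
  exact card_eq_pow_finrank

lemma cyclo_monic {m : ℕ} (hm0 : m ≠ 0) : ((X : K[X]) ^ m - 1).Monic := by
  rw [show ((X : K[X]) ^ m - 1) = X ^ m - C 1 by rw [map_one]]
  exact monic_X_pow_sub_C 1 hm0

lemma cyclo_natDegree {m : ℕ} : ((X : K[X]) ^ m - 1).natDegree = m := by
  rw [show ((X : K[X]) ^ m - 1) = X ^ m - C 1 by rw [map_one]]
  exact natDegree_X_pow_sub_C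

lemma finrank_ne_zero {m : ℕ} (hm : Module.finrank K E = m) : m ≠ 0 := by
  have := Module.finrank_pos (R := K) (M := E)
  omega

lemma dvd_of_aeval_frobK_eq_zero {m : ℕ} (hm : Module.finrank K E = m) (g : K[X])
    (hg : aeval (frobK K) g = 0) : ((X : K[X]) ^ m - 1) ∣ g := by
  classical
  set k := Nat.card K with hk
  have hk2 : 2 ≤ k := card_K_two_le K
  have hm0 : m ≠ 0 := finrank_ne_zero K hm
  have hmonic := cyclo_monic K (E := E) hm0
  set r := g %ₘ ((X : K[X]) ^ m - 1) with hr
  have hr0 : aeval (frobK K) r = 0 := by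
    have h1 := modByMonic_add_div g ((X : K[X]) ^ m - 1)
    have h2 := congrArg (aeval (frobK K)) h1
    rw [map_add, map_mul, aeval_frobK_cyclo K hm, zero_mul, add_zero] at h2
    rw [← hr] at h2
    exact h2.trans hg
  by_contra hdvd
  have hrne : r ≠ 0 := fun h0 => hdvd ((modByMonic_eq_zero_iff_dvd hmonic).mp h0)
  have hfne1 : ((X : K[X]) ^ m - 1) ≠ 1 := by
    intro h
    have := cyclo_natDegree (K := K) (m := m)
    rw [h, natDegree_one] at this
    omega
  have hN : r.natDegree < m := by
    have := natDegree_modByMonic_lt g hmonic hfne1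
    rwa [cyclo_natDegree] at this
  set N := r.natDegree with hNdef
  set P : E[X] := ∑ i ∈ r.support, C ((r.coeff i : E)) * X ^ (k ^ i) with hPdef
  have heval : ∀ x : E, P.eval x = 0 := by
    intro x
    have h0 : (r.sum fun i a => (a : E) * x ^ k ^ i) = 0 := by
      rw [← aeval_frobK_apply, hr0]
      simp
    rw [hPdef, eval_finset_sum]
    calc ∑ i ∈ r.support, eval x (C (r.coeff i : E) * X ^ (k ^ i))
        = r.sum fun i a => (a : E) * x ^ k ^ i := by
          rw [Polynomial.sum]
          exact Finset.sum_congr rfl fun i _ => by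
            rw [eval_mul, eval_C, eval_pow, eval_X]
      _ = 0 := h0
  have hPdeg : P.natDegree < Fintype.card E := by
    have h1 : P.natDegree ≤ k ^ N := by
      refine natDegree_sum_le_of_forall_le _ _ fun i hi => ?_
      refine le_trans (natDegree_mul_le) ?_
      rw [natDegree_C, natDegree_X_pow, zero_add]
      exact Nat.pow_le_pow_right (by omega) (le_natDegree_of_mem_supp i hi)
    have h2 : k ^ N < k ^ m := Nat.pow_lt_pow_right (by omega) hN
    have h3 : Fintype.card E = k ^ m := card_E_eq K hm
    omega
  have hP0 : P = 0 :=
    P.eq_zero_of_natDegree_lt_card_of_eval_eq_zero (f := (id : E → E))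
      Function.injective_id (fun x => heval x) (by simpa using hPdeg)
  have hcoeff : P.coeff (k ^ N) = (r.coeff N : E) := by
    rw [hPdef, finset_sum_coeff]
    rw [Finset.sum_eq_single N]
    · rw [coeff_C_mul, coeff_X_pow, if_pos rfl, mul_one]
    · intro i hi hiN
      rw [coeff_C_mul, coeff_X_pow, if_neg, mul_zero]
      exact fun h => hiN ((Nat.pow_right_injective hk2 h).symm)
    · intro hN'
      exact absurd (natDegree_mem_support_of_nonzero hrne) hN'
  rw [hP0, coeff_zero] at hcoeff
  have hcN : r.coeff N = 0 := by
    exact_mod_cast hcoeff.symm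
  exact hrne (leadingCoeff_eq_zero.mp hcN)

lemma exists_frobK_generator {m : ℕ} (hm : Module.finrank K E = m) :
    ∃ w : E, ∀ g : K[X], (aeval (frobK K) g) w = 0 → ((X : K[X]) ^ m - 1) ∣ g := by
  classical
  set σ := frobK K with hσdef
  set f : K[X] := X ^ m - 1 with hfdef
  have hm0 : m ≠ 0 := finrank_ne_zero K hm
  have hf0 : f ≠ 0 := (cyclo_monic K (E := E) hm0).ne_zero
  have haef : aeval σ f = 0 := aeval_frobK_cyclo K hm
  set Fs := UniqueFactorizationMonoid.normalizedFactors f with hFs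
  set T := Fs.toFinset with hT
  set e : K[X] → ℕ := fun P => Fs.count P with he
  have hprime : ∀ P ∈ T, Prime P := fun P hP =>
    UniqueFactorizationMonoid.prime_of_normalized_factor P (Multiset.mem_toFinset.mp hP)
  have hprod : Associated (∏ P ∈ T, P ^ e P) f := by
    rw [← Finset.prod_multiset_count]
    exact UniqueFactorizationMonoid.prod_normalizedFactors hf0
  obtain ⟨u, hu⟩ := hprod
  have hprodassoc : Associated (∏ P ∈ T, P ^ e P) f := ⟨u, hu⟩
  set c : K[X] → K[X] := fun P => ∏ Q ∈ T.erase P, Q ^ e Q with hcdef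
  have hPc : ∀ P ∈ T, P ^ e P * c P = ∏ Q ∈ T, Q ^ e Q := fun P hP =>
    Finset.mul_prod_erase T (fun Q => Q ^ e Q) hP
  have hnotdvd : ∀ P ∈ T, ∀ Q ∈ T, P ≠ Q → ¬ (P ∣ Q ^ e Q) := by
    intro P hP Q hQ hne hdvd
    have hPQ : P ∣ Q := (hprime P hP).dvd_of_dvd_pow hdvd
    have hassoc : Associated P Q :=
      (hprime P hP).irreducible.associated_of_dvd (hprime Q hQ).irreducible hPQ
    have hPn := UniqueFactorizationMonoid.normalize_normalized_factor P
      (Multiset.mem_toFinset.mp hP)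
    have hQn := UniqueFactorizationMonoid.normalize_normalized_factor Q
      (Multiset.mem_toFinset.mp hQ)
    exact hne (by
      rw [← hPn, ← hQn]
      exact normalize_eq_normalize_iff.mpr ⟨hassoc.dvd, hassoc.symm.dvd⟩)
  have hPnotc : ∀ P ∈ T, ¬ P ∣ c P := by
    intro P hP hdvd
    obtain ⟨Q, hQ, hdQ⟩ := ((hprime P hP).dvd_finset_prod_iff _).mp hdvd
    exact hnotdvd P hP Q (Finset.mem_of_mem_erase hQ)
      (Ne.symm (Finset.ne_of_mem_erase hQ)) hdQ
  have hc0 : ∀ P ∈ T, c P ≠ 0 := by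
    intro P hP
    refine Finset.prod_ne_zero_iff.mpr fun Q hQ => pow_ne_zero _ ?_
    exact (hprime Q (Finset.mem_of_mem_erase hQ)).ne_zero
  have hePos : ∀ P ∈ T, 1 ≤ e P :=
    fun P hP => Multiset.count_pos.mpr (Multiset.mem_toFinset.mp hP)
  have hprod0 : aeval σ (∏ Q ∈ T, Q ^ e Q) = 0 := by
    have hQf : (∏ Q ∈ T, Q ^ e Q) = f * ↑u⁻¹ := by
      rw [← hu, mul_assoc, Units.mul_inv, mul_one]
    rw [hQf, map_mul, haef, zero_mul]
  have hxP : ∀ P ∈ T, ∃ xP : E, (aeval σ (c P * P ^ (e P - 1))) xP ≠ 0 := by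
    intro P hP
    by_contra hno
    push_neg at hno
    have hz : aeval σ (c P * P ^ (e P - 1)) = 0 := LinearMap.ext fun x => hno x
    have hdv : f ∣ c P * P ^ (e P - 1) := dvd_of_aeval_frobK_eq_zero K hm _ hz
    have hdv2 : P ^ e P * c P ∣ c P * P ^ (e P - 1) := by
      refine dvd_trans ?_ hdv
      rw [hPc P hP]
      exact hprodassoc.dvd
    obtain ⟨t, ht⟩ := hdv2
    have hPe : (P : K[X]) ^ e P = P ^ (e P - 1) * P := by
      conv_lhs => rw [show e P = (e P - 1) + 1 from (Nat.succ_pred_eq_of_pos (hePos P hP)).symm]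
      rw [pow_succ]
    have hcancel : (1 : K[X]) = P * t := by
      have hne : c P * P ^ (e P - 1) ≠ 0 :=
        mul_ne_zero (hc0 P hP) (pow_ne_zero _ (hprime P hP).ne_zero)
      apply mul_left_cancel₀ hne
      calc c P * P ^ (e P - 1) * 1 = c P * P ^ (e P - 1) := mul_one _
        _ = P ^ e P * c P * t := ht
        _ = c P * P ^ (e P - 1) * (P * t) := by rw [hPe]; ring
    exact (hprime P hP).not_unit (IsUnit.of_mul_eq_one (a := P) t hcancel.symm)
  choose xP hxPne using hxP
  set y : K[X] → E := fun P => if h : P ∈ T then (aeval σ (c P)) (xP P h) else 0 with hy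
  have hyA : ∀ P ∈ T, (aeval σ (P ^ e P)) (y P) = 0 := by
    intro P hP
    rw [hy]
    simp only [dif_pos hP]
    have h1 : (aeval σ (P ^ e P)) ((aeval σ (c P)) (xP P hP))
        = (aeval σ (P ^ e P * c P)) (xP P hP) := by
      rw [map_mul, Module.End.mul_apply]
    rw [h1, hPc P hP, hprod0]
    simp
  have hyB : ∀ P ∈ T, (aeval σ (P ^ (e P - 1))) (y P) ≠ 0 := by
    intro P hP
    rw [hy]
    simp only [dif_pos hP]
    have heq : (aeval σ (P ^ (e P - 1))) ((aeval σ (c P)) (xP P hP))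
        = (aeval σ (c P * P ^ (e P - 1))) (xP P hP) := by
      rw [mul_comm, map_mul, Module.End.mul_apply]
    rw [heq]
    exact hxPne P hP
  have hyOrd : ∀ P ∈ T, ∀ v : K[X], (aeval σ v) (y P) = 0 → P ^ e P ∣ v := by
    intro P hP v hv
    set dd := EuclideanDomain.gcd v (P ^ e P) with hdd
    obtain ⟨i, hie, hassoc⟩ := (dvd_prime_pow (hprime P hP) (e P)).mp
      (EuclideanDomain.gcd_dvd_right v (P ^ e P))
    rcases Nat.lt_or_ge i (e P) with hlt | hge
    · exfalso
      have hdd0 : (aeval σ dd) (y P) = 0 := by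
        have hbezout : dd = EuclideanDomain.gcdA v (P ^ e P) * v
            + EuclideanDomain.gcdB v (P ^ e P) * (P ^ e P) := by
          rw [hdd, EuclideanDomain.gcd_eq_gcd_ab]; ring
        rw [hbezout, map_add, map_mul, map_mul, LinearMap.add_apply, Module.End.mul_apply,
          Module.End.mul_apply, hv, hyA P hP, map_zero, map_zero, add_zero]
      obtain ⟨uu, huu⟩ := hassoc.symm
      have hPi0 : (aeval σ ((P : K[X]) ^ i)) (y P) = 0 := by
        have hPi : (P : K[X]) ^ i = ↑uu⁻¹ * dd := by
          rw [hdd, ← huu, mul_comm ((P : K[X]) ^ i) (↑uu : K[X]), ← mul_assoc,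
            Units.inv_mul, one_mul]
        rw [hPi, map_mul, Module.End.mul_apply, hdd0, map_zero]
      have hkill : (aeval σ (P ^ (e P - 1))) (y P) = 0 := by
        have hsplit : (P : K[X]) ^ (e P - 1) = P ^ (e P - 1 - i) * P ^ i := by
          rw [← pow_add]; congr 1; omega
        rw [hsplit, map_mul, Module.End.mul_apply, hPi0, map_zero]
      exact hyB P hP hkill
    · have hieq : i = e P := le_antisymm hie hge
      rw [hieq] at hassoc
      exact hassoc.symm.dvd.trans (EuclideanDomain.gcd_dvd_left v (P ^ e P))
  refine ⟨∑ P ∈ T, y P, ?_⟩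
  intro g hg
  have hdvd : ∀ P ∈ T, P ^ e P ∣ g := by
    intro P hP
    have hz : (aeval σ (c P * g)) (∑ Q ∈ T, y Q) = 0 := by
      rw [map_mul, Module.End.mul_apply, hg, map_zero]
    have hsum : (aeval σ (c P * g)) (∑ Q ∈ T, y Q)
        = ∑ Q ∈ T, (aeval σ (c P * g)) (y Q) := map_sum _ _ _
    have hterm : ∀ Q ∈ T, Q ≠ P → (aeval σ (c P * g)) (y Q) = 0 := by
      intro Q hQ hne
      obtain ⟨s, hs⟩ : (Q : K[X]) ^ e Q ∣ c P :=
        Finset.dvd_prod_of_mem _ (Finset.mem_erase.mpr ⟨hne, hQ⟩)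
      rw [hs, show (Q : K[X]) ^ e Q * s * g = s * g * Q ^ e Q by ring, map_mul,
        Module.End.mul_apply, hyA Q hQ, map_zero]
    have hP0 : (aeval σ (c P * g)) (y P) = 0 := by
      have hz2 : (∑ Q ∈ T, (aeval σ (c P * g)) (y Q)) = 0 := hsum ▸ hz
      rwa [Finset.sum_eq_single_of_mem P hP (fun Q hQ hne => hterm Q hQ hne)] at hz2
    have hPg : P ^ e P ∣ c P * g := hyOrd P hP _ hP0
    have hcop : IsCoprime ((P : K[X]) ^ e P) (c P) :=
      ((hprime P hP).coprime_iff_not_dvd.mpr (hPnotc P hP)).pow_left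
    exact hcop.dvd_of_dvd_mul_left hPg
  have hcopPQ : (T : Set K[X]).Pairwise (Function.onFun IsCoprime fun P => P ^ e P) := by
    intro P hP Q hQ hne
    have h1 : IsCoprime (P : K[X]) Q :=
      (hprime P hP).coprime_iff_not_dvd.mpr (fun hd => hnotdvd P hP Q hQ hne
        (hd.trans (dvd_pow_self Q (Nat.one_le_iff_ne_zero.mp (hePos Q hQ)))))
    exact h1.pow
  have hproddvd : (∏ P ∈ T, P ^ e P) ∣ g :=
    Finset.prod_dvd_of_coprime hcopPQ (fun P hP => hdvd P hP)
  exact (hprodassoc.dvd_iff_dvd_left).mp hproddvd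

lemma of_pow_smul (σ : E →ₗ[K] E) (j : ℕ) (x : E) :
    Module.AEval'.of σ ((σ ^ j) x) = ((X : K[X]) ^ j) • Module.AEval'.of σ x := by
  induction j with
  | zero => simp
  | succ j ih =>
      rw [pow_succ', Module.End.mul_apply, Module.AEval'.X_smul_of σ ((σ ^ j) x) |>.symm, ih,
        smul_smul, ← pow_succ']

lemma span_orbit_iff {m : ℕ} (hm : Module.finrank K E = m) (x : E) :
    Submodule.span K (Set.range fun i : Fin m => x ^ (Nat.card K) ^ (i : ℕ)) = ⊤ ↔
      Submodule.span K[X] {Module.AEval'.of (frobK K) x} = ⊤ := by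
  classical
  set σ := frobK K with hσdef
  have hm0 : m ≠ 0 := finrank_ne_zero K hm
  have hσm : σ ^ m = 1 := frobK_pow_finrank K hm
  constructor
  · intro hspan
    rw [Submodule.eq_top_iff']
    intro z
    have key : Submodule.span K (Set.range fun i : Fin m => x ^ (Nat.card K) ^ (i : ℕ)) ≤
        Submodule.comap ((Module.AEval'.of σ : E ≃ₗ[K] Module.AEval' σ) :
            E →ₗ[K] Module.AEval' σ)
          ((Submodule.span K[X] {Module.AEval'.of σ x}).restrictScalars K) := by
      refine Submodule.span_le.mpr ?_
      rintro y ⟨i, rfl⟩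
      simp only [SetLike.mem_coe, Submodule.mem_comap, Submodule.restrictScalars_mem, LinearEquiv.coe_coe]
      have hofi : Module.AEval'.of σ (x ^ (Nat.card K) ^ (i : ℕ)) =
          ((X : K[X]) ^ (i : ℕ)) • Module.AEval'.of σ x := by
        rw [← frobK_pow_apply, ← hσdef, of_pow_smul]
      rw [hofi]
      exact Submodule.smul_mem _ _ (Submodule.mem_span_singleton_self _)
    have hz := key (hspan ▸ Submodule.mem_top : (Module.AEval'.of σ).symm z ∈ _)
    simpa using hz
  · intro hgen
    rw [eq_top_iff]
    rintro y -
    obtain ⟨g, hg⟩ := Submodule.mem_span_singleton.mp (hgen ▸ Submodule.mem_top :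
      Module.AEval'.of σ y ∈ Submodule.span K[X] {Module.AEval'.of σ x})
    have hy : y = (aeval σ g) x := by
      apply (Module.AEval'.of σ).injective
      rw [← hg, ← Module.AEval.of_aeval_smul]
      rfl
    rw [hy, hσdef, aeval_frobK_apply, Polynomial.sum]
    refine Submodule.sum_mem _ fun i _ => ?_
    have hmem : x ^ (Nat.card K) ^ i ∈
        Submodule.span K (Set.range fun i : Fin m => x ^ (Nat.card K) ^ (i : ℕ)) := by
      have hx : x ^ (Nat.card K) ^ i = x ^ (Nat.card K) ^ (i % m) := by
        rw [← frobK_pow_apply, ← frobK_pow_apply, ← hσdef, pow_eq_pow_mod i hσm]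
      rw [hx]
      exact Submodule.subset_span ⟨⟨i % m, Nat.mod_lt _ (Nat.pos_of_ne_zero hm0)⟩, rfl⟩
    exact Submodule.smul_mem _ (g.coeff i) hmem

lemma isNormal_iff_gen (q l n : ℕ) (hc : Nat.card K = q ^ l)
    (hm : Module.finrank K E = n / l) (x : E) :
    IsNormalElementOver q l n K x ↔
      Submodule.span K[X] {Module.AEval'.of (frobK K) x} = ⊤ := by
  constructor
  · rintro ⟨B, hB⟩
    refine (span_orbit_iff K hm x).mp ?_
    rw [show (fun i : Fin (n / l) => x ^ (Nat.card K) ^ (i : ℕ)) = ⇑B from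
      funext fun i => by rw [hB i, hc], B.span_eq]
  · intro hgen
    have hcard : Fintype.card (Fin (n / l)) = Module.finrank K E := by simp [hm]
    refine ⟨basisOfTopLeSpanOfCardEqFinrank _ ((span_orbit_iff K hm x).mpr hgen).ge hcard,
      fun i => ?_⟩
    rw [show (basisOfTopLeSpanOfCardEqFinrank _ ((span_orbit_iff K hm x).mpr hgen).ge hcard) i
        = x ^ (Nat.card K) ^ (i : ℕ) from
      congrFun (coe_basisOfTopLeSpanOfCardEqFinrank _ _ _) i, hc]

lemma span_singleton_quot_eq_top_iff {R : Type*} [CommRing R] (I : Ideal R) (a : R ⧸ I) :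
    Submodule.span R {a} = ⊤ ↔ IsUnit a := by
  have mk_smul : ∀ (r : R) (b : R ⧸ I), r • b = Ideal.Quotient.mk I r * b := by
    intro r b
    obtain ⟨g, rfl⟩ := Ideal.Quotient.mk_surjective b
    rw [← map_mul, ← Ideal.Quotient.mk_eq_mk, ← Ideal.Quotient.mk_eq_mk, ← smul_eq_mul,
      Submodule.Quotient.mk_smul]
  constructor
  · intro h
    have h1 : (1 : R ⧸ I) ∈ Submodule.span R {a} := h ▸ Submodule.mem_top
    obtain ⟨r, hr⟩ := Submodule.mem_span_singleton.mp h1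
    exact IsUnit.of_mul_eq_one (a := a) (Ideal.Quotient.mk I r) (by rw [← hr, mk_smul, mul_comm])
  · intro h
    obtain ⟨b, hb⟩ := h.exists_right_inv
    rw [Submodule.eq_top_iff']
    intro c
    obtain ⟨rb, rfl⟩ := Ideal.Quotient.mk_surjective b
    obtain ⟨rc, rfl⟩ := Ideal.Quotient.mk_surjective c
    refine Submodule.mem_span_singleton.mpr ⟨rc * rb, ?_⟩
    rw [mk_smul, map_mul, mul_assoc, mul_comm (Ideal.Quotient.mk I rb) a, hb, mul_one]

lemma gen_map {R M₁ M₂ : Type*} [CommRing R] [AddCommGroup M₁] [AddCommGroup M₂]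
    [Module R M₁] [Module R M₂] (e : M₁ ≃ₗ[R] M₂) (z : M₁)
    (h : Submodule.span R {z} = ⊤) : Submodule.span R {e z} = ⊤ := by
  rw [show ({e z} : Set M₂) = e.toLinearMap '' {z} by simp, ← Submodule.map_span, h,
    Submodule.map_top, LinearMap.range_eq_top]
  exact e.surjective

lemma gen_congr {R M₁ M₂ : Type*} [CommRing R] [AddCommGroup M₁] [AddCommGroup M₂]
    [Module R M₁] [Module R M₂] (e : M₁ ≃ₗ[R] M₂) (z : M₁) :
    Submodule.span R {z} = ⊤ ↔ Submodule.span R {e z} = ⊤ := by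
  refine ⟨gen_map e z, fun h => ?_⟩
  simpa using gen_map e.symm (e z) h

/-- Units of a monoid are equivalent to the subtype of elements that are units. -/
noncomputable def unitsEquivSubtype (Q : Type*) [CommMonoid Q] : Qˣ ≃ {a : Q // IsUnit a} where
  toFun u := ⟨u, u.isUnit⟩
  invFun a := a.2.unit
  left_inv u := Units.ext (by simp)
  right_inv a := Subtype.ext (by simp)

theorem card_normal (q l n : ℕ) (hc : Nat.card K = q ^ l)
    (hm : Module.finrank K E = n / l) :
    Nat.card {x : E // IsNormalElementOver q l n K x}
      = polyPhi ((X : K[X]) ^ (n / l) - 1) := by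
  classical
  set σ := frobK K with hσdef
  set m := n / l with hmdef
  set f : K[X] := X ^ m - 1 with hfdef
  obtain ⟨w, hw⟩ := exists_frobK_generator K hm
  set ε : K[X] →ₗ[K[X]] Module.AEval' σ :=
    LinearMap.toSpanSingleton K[X] (Module.AEval' σ) (Module.AEval'.of σ w) with hε
  have hsmul_eval : ∀ (g : K[X]) (x : E),
      g • (Module.AEval'.of σ x) = Module.AEval'.of σ ((aeval σ g) x) := by
    intro g x
    rw [← Module.AEval.of_aeval_smul]
    rfl
  have hker : LinearMap.ker ε = Ideal.span {f} := by
    ext g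
    rw [LinearMap.mem_ker, hε, LinearMap.toSpanSingleton_apply, hsmul_eval]
    constructor
    · intro h0
      have hz : (aeval σ g) w = 0 := by
        apply (Module.AEval'.of σ).injective
        rw [map_zero]
        exact h0
      exact Ideal.mem_span_singleton.mpr (hw g hz)
    · intro hmem
      obtain ⟨t, rfl⟩ := Ideal.mem_span_singleton.mp hmem
      rw [hfdef, map_mul, Module.End.mul_apply, aeval_frobK_cyclo K hm]
      simp
  have hsurj : Function.Surjective ε := by
    rw [← LinearMap.range_eq_top, hε, ← LinearMap.span_singleton_eq_range]
    apply (span_orbit_iff K hm w).mp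
    have hm0 : m ≠ 0 := finrank_ne_zero K hm
    haveI : Nonempty (Fin m) := ⟨⟨0, Nat.pos_of_ne_zero hm0⟩⟩
    have hind : LinearIndependent K (fun i : Fin m => w ^ (Nat.card K) ^ (i : ℕ)) := by
      refine Fintype.linearIndependent_iff.mpr fun cvec hsum => ?_
      set g : K[X] := ∑ i : Fin m, C (cvec i) * X ^ (i : ℕ) with hgdef
      have hgw : (aeval σ g) w = 0 := by
        rw [hgdef, map_sum, LinearMap.sum_apply]
        calc ∑ i : Fin m, (aeval σ (C (cvec i) * X ^ (i : ℕ))) w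
            = ∑ i : Fin m, cvec i • w ^ (Nat.card K) ^ (i : ℕ) :=
              Finset.sum_congr rfl fun i _ => by
                rw [map_mul, map_pow, aeval_X, aeval_C, Module.End.mul_apply,
                  Module.algebraMap_end_apply, hσdef, frobK_pow_apply]
          _ = 0 := hsum
      have hfg : f ∣ g := hw g hgw
      have hg0 : g = 0 := by
        by_contra hgne
        have hdeg_lt : g.natDegree < m := by
          have hle : g.natDegree ≤ m - 1 := by
            refine natDegree_sum_le_of_forall_le _ _ fun i _ => ?_
            refine le_trans natDegree_mul_le ?_
            rw [natDegree_C, natDegree_X_pow, zero_add]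
            omega
          omega
        have hge : m ≤ g.natDegree := by
          have h1 := Polynomial.natDegree_le_of_dvd hfg hgne
          rwa [hfdef, cyclo_natDegree] at h1
        omega
      intro i
      have hci : g.coeff (i : ℕ) = cvec i := by
        rw [hgdef, finset_sum_coeff, Finset.sum_eq_single i]
        · rw [coeff_C_mul, coeff_X_pow, if_pos rfl, mul_one]
        · intro j _ hji
          rw [coeff_C_mul, coeff_X_pow, if_neg (fun h => hji (Fin.ext h.symm)), mul_zero]
        · intro hni
          exact absurd (Finset.mem_univ i) hni
      rw [hg0, coeff_zero] at hci
      exact hci.symm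
    have hBspan := (basisOfLinearIndependentOfCardEqFinrank hind (by simp [hm])).span_eq
    rwa [coe_basisOfLinearIndependentOfCardEqFinrank] at hBspan
  set ψ : Module.AEval' σ ≃ₗ[K[X]] (K[X] ⧸ Ideal.span {f}) :=
    ((Submodule.quotEquivOfEq (Ideal.span {f}) (LinearMap.ker ε) hker.symm).trans
      (ε.quotKerEquivOfSurjective hsurj)).symm with hψ
  have hiff : ∀ x : E, IsNormalElementOver q l n K x ↔
      IsUnit (ψ (Module.AEval'.of σ x)) := by
    intro x
    rw [isNormal_iff_gen K q l n hc hm x, ← hσdef, gen_congr ψ (Module.AEval'.of σ x)]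
    exact span_singleton_quot_eq_top_iff _ _
  have hequiv : {x : E // IsNormalElementOver q l n K x} ≃ (K[X] ⧸ Ideal.span {f})ˣ :=
    (Equiv.subtypeEquiv (((Module.AEval'.of σ).toEquiv).trans ψ.toEquiv) fun x =>
      hiff x).trans (unitsEquivSubtype _).symm
  rw [Nat.card_congr hequiv]
  rfl

lemma subfield_eq_of_card (K' : Subfield E) {c : ℕ} (hc2 : 2 ≤ c)
    (h1 : Nat.card K = c) (h2 : Nat.card K' = c) : K = K' := by
  classical
  set P : E[X] := X ^ c - X with hP
  have hPne : P ≠ 0 := by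
    intro h
    have hco : P.coeff c = 0 := by rw [h]; simp
    rw [hP, coeff_sub, coeff_X_pow, if_pos rfl, Polynomial.coeff_X, if_neg (by omega),
      sub_zero] at hco
    exact one_ne_zero hco
  have hdeg : P.natDegree ≤ c := by
    refine le_trans (natDegree_sub_le _ _) ?_
    simp [natDegree_X_pow, natDegree_X]
    omega
  have key : ∀ S' : Subfield E, Nat.card S' = c → (S' : Set E) = ↑P.roots.toFinset := by
    intro S' hS'
    letI : Fintype S' := Fintype.ofFinite S'
    have hsub : (S' : Set E) ⊆ ↑P.roots.toFinset := by
      intro a ha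
      have hpc : (⟨a, ha⟩ : S') ^ c = ⟨a, ha⟩ := by
        rw [← hS', Nat.card_eq_fintype_card]
        exact FiniteField.pow_card _
      have hac : a ^ c = a := by
        have := congrArg (Subtype.val) hpc
        push_cast at this
        exact this
      simp only [Finset.coe_sort_coe, Multiset.mem_toFinset, Finset.mem_coe]
      rw [mem_roots hPne]
      simp [hP, IsRoot.def, hac]
    have hcard1 : (S' : Set E).ncard = c := by
      rw [← hS', ← Nat.card_coe_set_eq]
      rfl
    have hcard2 : (↑P.roots.toFinset : Set E).ncard ≤ c := by
      rw [Set.ncard_coe_finset]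
      exact le_trans (Multiset.toFinset_card_le _) (le_trans (P.card_roots' ) hdeg)
    exact Set.eq_of_subset_of_ncard_le hsub (by omega) (P.roots.toFinset.finite_toSet)
  exact SetLike.ext' ((key K h1).trans (key K' h2).symm)

end Aux

/-- The starting bound of Section 3:
`CN_q(n) ≥ q^n·(1 - Σ_{d ∣ n} (1 - φ_d(X^(n/d) - 1)/q^n))`, where for each divisor `d`
of `n`, `K d` is the intermediate field with `q^d` elements and `φ_d` is the polynomial
Euler function of `(K d)[X]`. -/
theorem cn_starting_bound (q n : ℕ) (hq : IsPrimePow q) (hn : 0 < n)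
    (E : Type) [Field E] [Fintype E] (hE : Fintype.card E = q ^ n)
    (K : ℕ → Subfield E) (hK : ∀ d ∈ n.divisors, Nat.card (K d) = q ^ d) :
    (CN q n E : ℝ) ≥ (q : ℝ) ^ n *
      (1 - ∑ d ∈ n.divisors,
        (1 - (polyPhi ((X : Polynomial (K d)) ^ (n / d) - 1) : ℝ) / (q : ℝ) ^ n)) := by
  classical
  have hq2 : 2 ≤ q := hq.two_le
  have hiff : ∀ x : E, IsCompletelyNormal q n x ↔
      ∀ d ∈ n.divisors, IsNormalElementOver q d n (K d) x := by
    intro x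
    constructor
    · intro h d hd
      exact h d (Nat.dvd_of_mem_divisors hd) (K d) (hK d hd)
    · intro h l hl K' hK'
      have hl0 : l ≠ 0 := by
        rintro rfl
        exact hn.ne' (Nat.eq_zero_of_zero_dvd hl)
      have hlm : l ∈ n.divisors := Nat.mem_divisors.mpr ⟨hl, hn.ne'⟩
      have h2 : 2 ≤ q ^ l := by
        have := Nat.one_lt_pow hl0 (by omega : 1 < q)
        omega
      have hKeq : K l = K' := subfield_eq_of_card (K l) K' h2 (hK l hlm) hK'
      rw [← hKeq]
      exact h l hlm
  have hfin : ∀ d ∈ n.divisors, Module.finrank (K d) E = n / d := by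
    intro d hd
    letI : Fintype (K d) := Fintype.ofFinite (K d)
    have hcard : Fintype.card (K d) = q ^ d := by rw [← Nat.card_eq_fintype_card, hK d hd]
    have h1 : q ^ n = (q ^ d) ^ (Module.finrank (K d) E) := by
      rw [← hE, ← hcard]
      exact Module.card_eq_pow_finrank
    rw [← pow_mul] at h1
    have h2 : n = d * Module.finrank (K d) E := Nat.pow_right_injective hq2 h1
    rw [h2, Nat.mul_div_cancel_left _ (Nat.pos_of_mem_divisors hd)]
  set A : ℕ → Finset E := fun d =>
    Finset.univ.filter (fun x => IsNormalElementOver q d n (K d) x) with hA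
  set CNs : Finset E := Finset.univ.filter (fun x => IsCompletelyNormal q n x) with hCNs
  have hCNcard : CN q n E = CNs.card := by
    rw [CN, Nat.card_eq_fintype_card, Fintype.card_subtype]
  have hAcard : ∀ d ∈ n.divisors,
      (A d).card = polyPhi ((X : Polynomial (K d)) ^ (n / d) - 1) := by
    intro d hd
    rw [hA, ← Fintype.card_subtype, ← Nat.card_eq_fintype_card]
    exact card_normal (K d) q d n (hK d hd) (hfin d hd)
  have hsub : CNsᶜ ⊆ n.divisors.biUnion (fun d => (A d)ᶜ) := by
    intro x hx
    rw [Finset.mem_compl, hCNs, Finset.mem_filter] at hx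
    push_neg at hx
    have hx2 : ¬ IsCompletelyNormal q n x := hx (Finset.mem_univ x)
    rw [hiff x] at hx2
    push_neg at hx2
    obtain ⟨d, hd, hnd⟩ := hx2
    refine Finset.mem_biUnion.mpr ⟨d, hd, ?_⟩
    rw [Finset.mem_compl, hA, Finset.mem_filter]
    push_neg
    exact fun _ => hnd
  have hcompl_le : CNsᶜ.card ≤ ∑ d ∈ n.divisors, (A d)ᶜ.card :=
    le_trans (Finset.card_le_card hsub) (Finset.card_biUnion_le)
  have hsum_compl : ∀ d ∈ n.divisors, ((A d)ᶜ.card : ℝ)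
      = (q : ℝ) ^ n - (polyPhi ((X : Polynomial (K d)) ^ (n / d) - 1) : ℝ) := by
    intro d hd
    have h1 : (A d).card + (A d)ᶜ.card = q ^ n := by
      rw [Finset.card_add_card_compl, hE]
    have h2 : ((A d).card : ℝ) + ((A d)ᶜ.card : ℝ) = (q : ℝ) ^ n := by exact_mod_cast h1
    rw [← hAcard d hd]
    linarith
  have hCN_eq : (CNs.card : ℝ) = (q : ℝ) ^ n - (CNsᶜ.card : ℝ) := by
    have h1 : CNs.card + CNsᶜ.card = q ^ n := by
      rw [Finset.card_add_card_compl, hE]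
    have h2 : (CNs.card : ℝ) + (CNsᶜ.card : ℝ) = (q : ℝ) ^ n := by exact_mod_cast h1
    linarith
  have hqn0 : (q : ℝ) ^ n ≠ 0 := pow_ne_zero _ (Nat.cast_ne_zero.mpr (by omega))
  have hRHS : (q : ℝ) ^ n * (1 - ∑ d ∈ n.divisors,
      (1 - (polyPhi ((X : Polynomial (K d)) ^ (n / d) - 1) : ℝ) / (q : ℝ) ^ n))
      = (q : ℝ) ^ n - ∑ d ∈ n.divisors,
          ((q : ℝ) ^ n - (polyPhi ((X : Polynomial (K d)) ^ (n / d) - 1) : ℝ)) := by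
    rw [mul_sub, mul_one, Finset.mul_sum]
    congr 1
    refine Finset.sum_congr rfl fun d hd => ?_
    field_simp
  have hsum_le : (CNsᶜ.card : ℝ) ≤ ∑ d ∈ n.divisors,
      ((q : ℝ) ^ n - (polyPhi ((X : Polynomial (K d)) ^ (n / d) - 1) : ℝ)) := by
    calc (CNsᶜ.card : ℝ) ≤ ((∑ d ∈ n.divisors, (A d)ᶜ.card : ℕ) : ℝ) := by
          exact_mod_cast hcompl_le
      _ = ∑ d ∈ n.divisors, ((A d)ᶜ.card : ℝ) := by push_cast; ring
      _ = ∑ d ∈ n.divisors,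
          ((q : ℝ) ^ n - (polyPhi ((X : Polynomial (K d)) ^ (n / d) - 1) : ℝ)) :=
          Finset.sum_congr rfl hsum_compl
  rw [hCNcard, hRHS, ge_iff_le, hCN_eq]
  linarith
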